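/- arXiv:2509.21748 — 2 statements merged into one kernel-verified Lean document; each statement's English description precedes it below -/
import Mathlib

section
/- Let V be a finite set with |V| = N ≥ 1, let K and s be natural numbers with s ≤ N − K − 1, and suppose that to every x ∈ V is assigned a subset A(x) ⊆ V with |A(x)| = K + 1. For an s-element subset S ⊆ V define coverage(S) = |{x ∈ V : S ∩ A(x) ≠ ∅}| / N. Then the average of coverage(S) over all s-element subsets S of V equals 1 − ∏_{k=0}^{K} (N − s − k)/(N − k); that is, the expected coverage of a uniformly random coreset of size s is 1 − ∏_{k=0}^{K} (N − s − k)/(N − k). -/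
lemma choose_ratio (N s K : ℕ) (h : s + (K + 1) ≤ N) :
    ∏ k ∈ Finset.range (K + 1), ((N - s - k : ℕ) : ℚ) / ((N - k : ℕ) : ℚ)
      = ((N - (K + 1)).choose s : ℚ) / (N.choose s : ℚ) := by
  induction K with
  | zero =>
    simp only [zero_add, Finset.prod_range_one, Nat.sub_zero]
    have hN : 1 ≤ N := by omega
    have key : (N - 1).choose s * N = N.choose s * (N - s) := by
      have := Nat.choose_mul_succ_eq (N - 1) s
      rwa [Nat.sub_add_cancel hN] at this
    have keyQ : (((N - 1).choose s : ℚ)) * N = (N.choose s : ℚ) * ((N - s : ℕ) : ℚ) := by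
      exact_mod_cast key
    have hC : (N.choose s : ℚ) ≠ 0 := by
      have : 0 < N.choose s := Nat.choose_pos (by omega)
      exact_mod_cast this.ne'
    have hNq : (N : ℚ) ≠ 0 := by exact_mod_cast (by omega : N ≠ 0)
    field_simp
    linear_combination (-1 : ℚ) * keyQ
  | succ K ih =>
    rw [Finset.prod_range_succ, ih (by omega)]
    set M := N - (K + 1) with hM
    have hM1 : 1 ≤ M := by omega
    have key := Nat.choose_mul_succ_eq (M - 1) s
    rw [Nat.sub_add_cancel hM1] at key
    have keyQ : (((M - 1).choose s : ℚ)) * M = (M.choose s : ℚ) * ((M - s : ℕ) : ℚ) := by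
      exact_mod_cast key
    have h1 : N - s - (K + 1) = M - s := by omega
    have h2 : N - (K + 1 + 1) = M - 1 := by omega
    rw [h1, h2]
    have hMq : (M : ℚ) ≠ 0 := by exact_mod_cast (by omega : M ≠ 0)
    have hC : (N.choose s : ℚ) ≠ 0 := by
      have : 0 < N.choose s := Nat.choose_pos (by omega)
      exact_mod_cast this.ne'
    field_simp
    linear_combination (-1 : ℚ) * keyQ



/-- Let `|V| = N ≥ 1`, `s ≤ N − K − 1`, and assume each `x ∈ V` is
assigned a neighborhood `A x ⊆ V` with `|A x| = K + 1`.  For an `s`-subset `S ⊆ V`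
set `coverage(S) = |{x ∈ V : S ∩ A x ≠ ∅}| / N`.  Then the average of `coverage(S)`
over all `s`-element subsets `S` of `V` equals
`1 − ∏_{k=0}^{K} (N − s − k)/(N − k)`. -/
theorem expected_coverage
    {α : Type*} [DecidableEq α] (V : Finset α) (N K s : ℕ)
    (hV : V.card = N) (hN : 1 ≤ N) (hs : s ≤ N - K - 1)
    (A : α → Finset α) (hAV : ∀ x ∈ V, A x ⊆ V) (hA : ∀ x ∈ V, (A x).card = K + 1) :
    (∑ S ∈ V.powersetCard s,
        ((V.filter (fun x => (S ∩ A x).Nonempty)).card : ℚ) / (N : ℚ))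
        / ((V.powersetCard s).card : ℚ)
      = 1 - ∏ k ∈ Finset.range (K + 1), ((N - s - k : ℕ) : ℚ) / ((N - k : ℕ) : ℚ) := by
  classical
  obtain ⟨x0, hx0⟩ : V.Nonempty := by rw [← Finset.card_pos, hV]; omega
  have hK1 : K + 1 ≤ N := by
    have := Finset.card_le_card (hAV x0 hx0)
    rwa [hA x0 hx0, hV] at this
  have hsum : s + (K + 1) ≤ N := by omega
  have hfix : ∀ x ∈ V,
      ((V.powersetCard s).filter (fun S => ¬ (S ∩ A x).Nonempty)).card
        = (N - (K + 1)).choose s := by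
    intro x hx
    have heq : (V.powersetCard s).filter (fun S => ¬ (S ∩ A x).Nonempty)
        = (V \ A x).powersetCard s := by
      ext S
      simp only [Finset.mem_filter, Finset.mem_powersetCard,
        Finset.not_nonempty_iff_eq_empty, ← Finset.disjoint_iff_inter_eq_empty,
        Finset.subset_sdiff]
      tauto
    rw [heq, Finset.card_powersetCard, Finset.card_sdiff_of_subset (hAV x hx), hA x hx, hV]
  have hcount : ∀ x ∈ V,
      ((V.powersetCard s).filter (fun S => (S ∩ A x).Nonempty)).card
        = N.choose s - (N - (K + 1)).choose s := by
    intro x hx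
    have := Finset.card_filter_add_card_filter_not
      (s := V.powersetCard s) (p := fun S => (S ∩ A x).Nonempty)
    rw [hfix x hx, Finset.card_powersetCard, hV] at this
    omega
  have hle : (N - (K + 1)).choose s ≤ N.choose s :=
    Nat.choose_le_choose s (by omega)
  have hsum2 : ∑ S ∈ V.powersetCard s,
      ((V.filter (fun x => (S ∩ A x).Nonempty)).card : ℚ)
      = (N : ℚ) * ((N.choose s : ℚ) - ((N - (K + 1)).choose s : ℚ)) := by
    have : ∀ S, ((V.filter (fun x => (S ∩ A x).Nonempty)).card : ℚ)
        = ∑ x ∈ V, if (S ∩ A x).Nonempty then (1 : ℚ) else 0 := by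
      intro S
      rw [Finset.card_filter]
      push_cast
      rfl
    simp only [this]
    rw [Finset.sum_comm]
    have hrow : ∀ x ∈ V, (∑ S ∈ V.powersetCard s,
        if (S ∩ A x).Nonempty then (1 : ℚ) else 0)
        = (N.choose s : ℚ) - ((N - (K + 1)).choose s : ℚ) := by
      intro x hx
      rw [Finset.sum_boole, hcount x hx]
      push_cast [Nat.cast_sub hle]
      ring
    rw [Finset.sum_congr rfl hrow, Finset.sum_const, hV, nsmul_eq_mul]
  rw [← Finset.sum_div, hsum2, Finset.card_powersetCard, hV,
    choose_ratio N s K hsum]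
  have hC : (N.choose s : ℚ) ≠ 0 := by
    have : 0 < N.choose s := Nat.choose_pos (by omega)
    exact_mod_cast this.ne'
  have hNq : (N : ℚ) ≠ 0 := by exact_mod_cast (by omega : N ≠ 0)
  field_simp
end

section
/- Let V be a finite set, let m ≥ 1 be a natural number with m ≤ |V|, and let f be a function from subsets of V to ℝ satisfying f(∅) = 0, monotonicity (A ⊆ B ⊆ V implies f(A) ≤ f(B)), and submodularity (for all A ⊆ B ⊆ V and k ∈ V \ B, f(A ∪ {k}) − f(A) ≥ f(B ∪ {k}) − f(B)). Let ∅ = S_0 ⊆ S_1 ⊆ ⋯ ⊆ S_m ⊆ V be a greedy chain, i.e. for each t with 1 ≤ t ≤ m there is v_t ∈ V \ S_{t−1} with S_t = S_{t−1} ∪ {v_t} and f(S_t) − f(S_{t−1}) ≥ f(S_{t−1} ∪ {v}) − f(S_{t−1}) for every v ∈ V \ S_{t−1}. Then f(S_m) ≥ (1 − (1 − 1/m)^m) · f(T) for every subset T ⊆ V with |T| = m; in particular f(S_m) ≥ (1 − 1/e) · max_{T ⊆ V, |T| = m} f(T). -/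
/-- (Nemhauser–Wolsey–Fisher) Let `f : 2^V → ℝ` be normalized
(`f ∅ = 0`), monotone, and submodular on the finite set `V`, let `1 ≤ m ≤ |V|`,
and let `∅ = S 0 ⊆ S 1 ⊆ ⋯ ⊆ S m ⊆ V` be a greedy chain: at each step `t`,
`S t = S (t−1) ∪ {v_t}` for some `v_t ∈ V \ S (t−1)` whose marginal gain is
maximal among all elements of `V \ S (t−1)`.  Then
`f (S m) ≥ (1 − (1 − 1/m)^m) · f T` for every `T ⊆ V` with `|T| = m`; in
particular `f (S m) ≥ (1 − 1/e) · f T` for every such `T`, i.e. greedy achieves a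
`(1 − 1/e)`-approximation of `max_{|T| = m} f T`. -/
theorem greedy_submodular_guarantee
    {α : Type*} [DecidableEq α] (V : Finset α) (m : ℕ) (hm : 1 ≤ m)
    (hmV : m ≤ V.card) (f : Finset α → ℝ)
    (hempty : f ∅ = 0)
    (hmono : ∀ A B : Finset α, A ⊆ B → B ⊆ V → f A ≤ f B)
    (hsub : ∀ A B : Finset α, A ⊆ B → B ⊆ V → ∀ k ∈ V, k ∉ B →
        f (insert k A) - f A ≥ f (insert k B) - f B)
    (S : ℕ → Finset α) (hS0 : S 0 = ∅) (hSV : ∀ t ≤ m, S t ⊆ V)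
    (hgreedy : ∀ t, 1 ≤ t → t ≤ m → ∃ v ∈ V, v ∉ S (t - 1) ∧
        S t = insert v (S (t - 1)) ∧
        ∀ u ∈ V, u ∉ S (t - 1) →
          f (S t) - f (S (t - 1)) ≥ f (insert u (S (t - 1))) - f (S (t - 1))) :
    (∀ T ⊆ V, T.card = m → f (S m) ≥ (1 - (1 - 1 / (m : ℝ)) ^ m) * f T) ∧
    (∀ T ⊆ V, T.card = m → f (S m) ≥ (1 - 1 / Real.exp 1) * f T) := by
  have hm0 : (0:ℝ) < (m:ℝ) := by exact_mod_cast hm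
  have hfac0 : (0:ℝ) ≤ 1 - 1 / (m:ℝ) := by
    rw [sub_nonneg]
    rw [div_le_one hm0]
    exact_mod_cast hm
  -- key submodular telescoping lemma
  have key : ∀ B : Finset α, B ⊆ V → ∀ A : Finset α, A ⊆ V →
      f (A ∪ B) ≤ f A + ∑ v ∈ B \ A, (f (insert v A) - f A) := by
    intro B
    induction B using Finset.induction_on with
    | empty => intro _ A _; simp
    | insert b B' hb ih =>
      intro hBV A hAV
      have hB'V : B' ⊆ V := fun x hx => hBV (Finset.mem_insert_of_mem hx)
      have hbV : b ∈ V := hBV (Finset.mem_insert_self _ _)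
      by_cases hbA : b ∈ A
      · have h1 : A ∪ insert b B' = A ∪ B' := by
          ext x; simp only [Finset.mem_insert, Finset.mem_union]
          constructor
          · rintro (h | rfl | h)
            · exact Or.inl h
            · exact Or.inl hbA
            · exact Or.inr h
          · rintro (h | h)
            · exact Or.inl h
            · exact Or.inr (Or.inr h)
        have h2 : (insert b B') \ A = B' \ A := by
          ext x; simp only [Finset.mem_sdiff, Finset.mem_insert]
          constructor
          · rintro ⟨rfl | h, h2⟩
            · exact absurd hbA h2
            · exact ⟨h, h2⟩
          · rintro ⟨h, h2⟩
            exact ⟨Or.inr h, h2⟩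
        rw [h1, h2]; exact ih hB'V A hAV
      · have hbAB : b ∉ A ∪ B' := by simp [hbA, hb]
        have h1 : A ∪ insert b B' = insert b (A ∪ B') := by
          ext x; simp only [Finset.mem_insert, Finset.mem_union]; tauto
        have hABV : A ∪ B' ⊆ V := Finset.union_subset hAV hB'V
        have hsub' := hsub A (A ∪ B') Finset.subset_union_left hABV b hbV hbAB
        have hsplit : (insert b B') \ A = insert b (B' \ A) := by
          ext x; simp [Finset.mem_sdiff, Finset.mem_insert]
          constructor
          · rintro ⟨rfl | h, h2⟩
            · exact Or.inl rfl
            · exact Or.inr ⟨h, h2⟩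
          · rintro (rfl | ⟨h, h2⟩)
            · exact ⟨Or.inl rfl, hbA⟩
            · exact ⟨Or.inr h, h2⟩
        have hbB'A : b ∉ B' \ A := fun h => hb (Finset.mem_sdiff.mp h).1
        rw [h1, hsplit, Finset.sum_insert hbB'A]
        have := ih hB'V A hAV
        linarith
  have main : ∀ T ⊆ V, T.card = m → f (S m) ≥ (1 - (1 - 1 / (m : ℝ)) ^ m) * f T := by
    intro T hTV hTcard
    have step : ∀ t, t ≤ m → f T - f (S t) ≤ (1 - 1 / (m:ℝ)) ^ t * f T := by
      intro t
      induction t with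
      | zero => intro _; simp [hS0, hempty]
      | succ t iht =>
        intro ht
        have ht' : t ≤ m := Nat.le_of_succ_le ht
        obtain ⟨v, hvV, hvS, hSt, hmax⟩ := hgreedy (t+1) (Nat.le_add_left 1 t) ht
        simp only [Nat.add_sub_cancel] at hvS hSt hmax
        set δ := f T - f (S t) with hδ
        set g := f (S (t+1)) - f (S t) with hg
        have hStV : S t ⊆ V := hSV t ht'
        have hg0 : 0 ≤ g := by
          have : f (S t) ≤ f (S (t+1)) := by
            rw [hSt]
            exact hmono (S t) (insert v (S t))
              (Finset.subset_insert _ _) (Finset.insert_subset hvV hStV)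
          linarith
        -- δ ≤ m * g
        have hδm : δ ≤ (m:ℝ) * g := by
          have h1 : f T ≤ f (S t ∪ T) :=
            hmono T (S t ∪ T) Finset.subset_union_right
              (Finset.union_subset hStV hTV)
          have h2 := key T hTV (S t) hStV
          have h3 : ∑ u ∈ T \ S t, (f (insert u (S t)) - f (S t)) ≤
              ∑ _u ∈ T \ S t, g := by
            apply Finset.sum_le_sum
            intro u hu
            have huT := (Finset.mem_sdiff.mp hu).1
            have huS := (Finset.mem_sdiff.mp hu).2
            exact hmax u (hTV huT) huS
          have h4 : ∑ _u ∈ T \ S t, g = ((T \ S t).card : ℝ) * g := by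
            simp [Finset.sum_const, mul_comm]
          have h5 : ((T \ S t).card : ℝ) ≤ (m:ℝ) := by
            have : (T \ S t).card ≤ T.card := Finset.card_le_card (Finset.sdiff_subset)
            exact_mod_cast hTcard ▸ this
          have h6 : ((T \ S t).card : ℝ) * g ≤ (m:ℝ) * g :=
            mul_le_mul_of_nonneg_right h5 hg0
          calc δ = f T - f (S t) := rfl
            _ ≤ f (S t ∪ T) - f (S t) := by linarith
            _ ≤ ∑ v ∈ T \ S t, (f (insert v (S t)) - f (S t)) := by linarith
            _ ≤ (m:ℝ) * g := by rw [h4] at h3; linarith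
        have hstep : f T - f (S (t+1)) ≤ (1 - 1 / (m:ℝ)) * δ := by
          have : δ / (m:ℝ) ≤ g := by
            rw [div_le_iff₀ hm0]
            linarith [hδm]
          have hexp : (1 - 1 / (m:ℝ)) * δ = δ - δ / (m:ℝ) := by
            field_simp
          have : f T - f (S (t+1)) = δ - g := by rw [hδ, hg]; ring
          linarith
        have hδt := iht ht'
        calc f T - f (S (t+1)) ≤ (1 - 1 / (m:ℝ)) * δ := hstep
          _ ≤ (1 - 1 / (m:ℝ)) * ((1 - 1 / (m:ℝ)) ^ t * f T) :=
              mul_le_mul_of_nonneg_left hδt hfac0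
          _ = (1 - 1 / (m:ℝ)) ^ (t+1) * f T := by ring
    have := step m le_rfl
    linarith
  refine ⟨main, fun T hTV hTcard => ?_⟩
  have hfT0 : 0 ≤ f T := by
    have := hmono ∅ T (Finset.empty_subset _) hTV
    linarith
  have hexp : (1 - 1 / (m:ℝ)) ^ m ≤ 1 / Real.exp 1 := by
    have h1 : 1 - 1 / (m:ℝ) ≤ Real.exp (-(1 / (m:ℝ))) := by
      have := Real.add_one_le_exp (-(1 / (m:ℝ)))
      linarith
    have h2 : (1 - 1 / (m:ℝ)) ^ m ≤ (Real.exp (-(1 / (m:ℝ)))) ^ m :=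
      pow_le_pow_left₀ hfac0 h1 m
    have h3 : (Real.exp (-(1 / (m:ℝ)))) ^ m = Real.exp (-(1 / (m:ℝ)) * m) := by
      rw [← Real.exp_nat_mul]; ring_nf
    have h4 : -(1 / (m:ℝ)) * m = -1 := by field_simp
    rw [h3, h4] at h2
    rw [Real.exp_neg] at h2
    simpa [one_div] using h2
  have := main T hTV hTcard
  have : (1 - 1 / Real.exp 1) * f T ≤ (1 - (1 - 1 / (m:ℝ)) ^ m) * f T := by
    apply mul_le_mul_of_nonneg_right _ hfT0
    linarith
  linarith
end
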